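/- Let g'(λ) = ((1+2λ²)arcsec(λ) - √(λ²-1)(2+λ²))/(λ²-1)^{5/2} for λ > 1. Then lim_{λ→1⁺} g'(λ) = -1/15. -/

import Mathlib

open Real Filter Set

lemma my_arctan_upper {t : ℝ} (ht : 0 ≤ t) : arctan t ≤ t - t^3/3 + t^5/5 := by
  have key : ∀ x : ℝ, HasDerivAt (fun t => t - t^3/3 + t^5/5 - arctan t)
      (1 - x^2 + x^4 - 1/(1+x^2)) x := by
    intro x
    have h1 := Real.hasDerivAt_arctan x
    have h2 : HasDerivAt (fun t : ℝ => t - t^3/3 + t^5/5) (1 - x^2 + x^4) x := by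
      have := ((hasDerivAt_id x).sub ((hasDerivAt_pow 3 x).div_const 3)).add
        ((hasDerivAt_pow 5 x).div_const 5)
      refine HasDerivAt.congr_deriv this ?_
      push_cast; ring
    exact h2.sub h1
  have mono : Monotone (fun t => t - t^3/3 + t^5/5 - arctan t) := by
    apply monotone_of_deriv_nonneg
    · exact fun x => (key x).differentiableAt
    · intro x
      rw [(key x).deriv]
      have hx : (0:ℝ) < 1 + x^2 := by positivity
      have h : 1 - x^2 + x^4 - 1/(1+x^2) = x^6/(1+x^2) := by field_simp; ring
      rw [h]; positivity
  have := mono ht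
  simp only [Real.arctan_zero] at this
  norm_num at this
  linarith

lemma my_arctan_lower {t : ℝ} (ht : 0 ≤ t) : t - t^3/3 + t^5/5 - t^7/7 ≤ arctan t := by
  have key : ∀ x : ℝ, HasDerivAt (fun t => arctan t - (t - t^3/3 + t^5/5 - t^7/7))
      (1/(1+x^2) - (1 - x^2 + x^4 - x^6)) x := by
    intro x
    have h1 := Real.hasDerivAt_arctan x
    have h2 : HasDerivAt (fun t : ℝ => t - t^3/3 + t^5/5 - t^7/7) (1 - x^2 + x^4 - x^6) x := by
      have := (((hasDerivAt_id x).sub ((hasDerivAt_pow 3 x).div_const 3)).add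
        ((hasDerivAt_pow 5 x).div_const 5)).sub ((hasDerivAt_pow 7 x).div_const 7)
      refine HasDerivAt.congr_deriv this ?_
      push_cast; ring
    exact h1.sub h2
  have mono : Monotone (fun t => arctan t - (t - t^3/3 + t^5/5 - t^7/7)) := by
    apply monotone_of_deriv_nonneg
    · exact fun x => (key x).differentiableAt
    · intro x
      rw [(key x).deriv]
      have hx : (0:ℝ) < 1 + x^2 := by positivity
      have h : 1/(1+x^2) - (1 - x^2 + x^4 - x^6) = x^8/(1+x^2) := by field_simp; ring
      rw [h]; positivity
  have := mono ht
  simp only [Real.arctan_zero] at this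
  norm_num at this
  linarith

lemma my_h_lim :
    Tendsto (fun t : ℝ => ((3 + 2*t^2) * arctan t - t*(3 + t^2)) / t^5)
      (nhdsWithin 0 (Set.Ioi 0)) (nhds (-1/15)) := by
  have hlo : Tendsto (fun t : ℝ => -1/15 - t^2/35 - 2*t^4/7)
      (nhdsWithin 0 (Set.Ioi 0)) (nhds (-1/15)) := by
    have : Tendsto (fun t : ℝ => -1/15 - t^2/35 - 2*t^4/7) (nhds 0) (nhds (-1/15)) :=
      Continuous.tendsto' (by continuity) 0 _ (by norm_num)
    exact this.mono_left nhdsWithin_le_nhds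
  have hhi : Tendsto (fun t : ℝ => -1/15 + 2*t^2/5)
      (nhdsWithin 0 (Set.Ioi 0)) (nhds (-1/15)) := by
    have : Tendsto (fun t : ℝ => -1/15 + 2*t^2/5) (nhds 0) (nhds (-1/15)) :=
      Continuous.tendsto' (by continuity) 0 _ (by norm_num)
    exact this.mono_left nhdsWithin_le_nhds
  refine tendsto_of_tendsto_of_tendsto_of_le_of_le' hlo hhi ?_ ?_
  · filter_upwards [self_mem_nhdsWithin] with t (ht : 0 < t)
    rw [le_div_iff₀ (by positivity)]
    have h := my_arctan_lower ht.le
    nlinarith [mul_le_mul_of_nonneg_left h (by positivity : (0:ℝ) ≤ 3 + 2*t^2),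
      pow_pos ht 5, pow_pos ht 7, pow_pos ht 9, sq_nonneg t]
  · filter_upwards [self_mem_nhdsWithin] with t (ht : 0 < t)
    rw [div_le_iff₀ (by positivity)]
    have h := my_arctan_upper ht.le
    nlinarith [mul_le_mul_of_nonneg_left h (by positivity : (0:ℝ) ≤ 3 + 2*t^2),
      pow_pos ht 5, pow_pos ht 7]

theorem stmt_14 :
    Filter.Tendsto
      (fun lam : ℝ => ((1 + 2 * lam ^ 2) * Real.arccos (1 / lam) -
        Real.sqrt (lam ^ 2 - 1) * (2 + lam ^ 2)) / (lam ^ 2 - 1) ^ ((5:ℝ)/2))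
      (nhdsWithin 1 (Set.Ioi 1)) (nhds (-1 / 15)) := by
  have hcomp : Tendsto (fun lam : ℝ => Real.sqrt (lam^2 - 1))
      (nhdsWithin 1 (Set.Ioi 1)) (nhdsWithin 0 (Set.Ioi 0)) := by
    apply tendsto_nhdsWithin_of_tendsto_nhds_of_eventually_within
    · have : Tendsto (fun lam : ℝ => Real.sqrt (lam^2-1)) (nhds 1) (nhds 0) :=
        Continuous.tendsto' (by continuity) 1 0 (by norm_num)
      exact this.mono_left nhdsWithin_le_nhds
    · filter_upwards [self_mem_nhdsWithin] with lam (h : 1 < lam)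
      have : 0 < lam^2 - 1 := by nlinarith
      exact Real.sqrt_pos.mpr this
  have key := my_h_lim.comp hcomp
  refine Filter.Tendsto.congr' ?_ key
  filter_upwards [self_mem_nhdsWithin] with lam (h : 1 < lam)
  simp only [Function.comp_apply]
  have hl : (0:ℝ) < lam := by linarith
  have hpos : (0:ℝ) < lam^2 - 1 := by nlinarith
  have ht2 : Real.sqrt (lam^2-1) ^ 2 = lam^2 - 1 := Real.sq_sqrt hpos.le
  have harc : Real.arccos (1/lam) = Real.arctan (Real.sqrt (lam^2-1)) := by
    have hx : (0:ℝ) < 1/lam := by positivity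
    rw [Real.arccos_eq_arctan hx]
    congr 1
    rw [div_eq_mul_inv, one_div, inv_inv]
    have h1 : (0:ℝ) ≤ 1 - (1/lam)^2 := by
      have h2 : 1/lam ≤ 1 := by rw [div_le_one hl]; linarith
      nlinarith [hx.le]
    have hmul := Real.sqrt_mul h1 (lam^2)
    rw [Real.sqrt_sq hl.le] at hmul
    simp only [one_div] at hmul
    rw [← hmul]
    congr 1
    field_simp
  have hpow : (lam^2-1)^((5:ℝ)/2) = Real.sqrt (lam^2-1) ^ 5 := by
    rw [show ((5:ℝ)/2) = (1/2)*5 by norm_num, Real.rpow_mul hpos.le, ← Real.sqrt_eq_rpow]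
    exact_mod_cast Real.rpow_natCast _ 5
  rw [harc, hpow, ht2]
  ring
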